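/- Let G be a locally nilpotent group, U a subgroup of G, and M a maximal subgroup of U. Then M is normal in U. -/

import Mathlib

/-- The conjugate subgroup `H^g = g⁻¹Hg`. -/
def conjSub {G : Type*} [Group G] (g : G) (H : Subgroup G) : Subgroup G :=
  H.map (MulAut.conj g⁻¹).toMonoidHom

/-- `H` is abnormal in `G`: `g ∈ ⟨H, H^g⟩` for every `g ∈ G`. -/
def IsAbnormal {G : Type*} [Group G] (H : Subgroup G) : Prop :=
  ∀ g : G, g ∈ H ⊔ conjSub g H

/-- `H` is abnormal in the subgroup `B`: `H ≤ B` and `g ∈ ⟨H, H^g⟩` for every `g ∈ B`. -/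
def IsAbnormalIn {G : Type*} [Group G] (H B : Subgroup G) : Prop :=
  H ≤ B ∧ ∀ g ∈ B, g ∈ H ⊔ conjSub g H

lemma mem_conjSub {G : Type*} [Group G] {g x : G} {H : Subgroup G} :
    x ∈ conjSub g H ↔ g * x * g⁻¹ ∈ H := by
  simp only [conjSub, Subgroup.mem_map, MulEquiv.coe_toMonoidHom, MulAut.conj_apply, inv_inv]
  constructor
  · rintro ⟨m, hm, rfl⟩
    have h : g * (g⁻¹ * m * g) * g⁻¹ = m := by group
    rwa [h]
  · intro h
    exact ⟨g * x * g⁻¹, h, by group⟩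

/-- In a nilpotent group there are no proper "abnormal points": if
`g ∈ ⟨H, H^g⟩` then `g ∈ H`. -/
lemma nilpotent_no_abnormal {F : Type*} [Group F] (hnil : Group.IsNilpotent F)
    (H : Subgroup F) (g : F) (hg : g ∈ H ⊔ conjSub g H) : g ∈ H := by
  obtain ⟨n, hn⟩ := hnil.nilpotent'
  have key : ∀ i, g ∈ H ⊔ upperCentralSeries F i → g ∈ H := by
    intro i
    induction i with
    | zero => simp [upperCentralSeries, Subgroup.upperCentralSeries_zero]
    | succ i ih =>
      intro hgi
      set S := H ⊔ upperCentralSeries F i with hS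
      have hnorm : H ⊔ upperCentralSeries F (i + 1) ≤ Subgroup.normalizer (S : Set F) := by
        refine sup_le (le_trans le_sup_left (Subgroup.le_normalizer (H := S))) ?_
        intro z hz
        rw [Subgroup.mem_normalizer_iff]
        intro x
        have hcomm : ∀ y : F, z * y * z⁻¹ * y⁻¹ ∈ upperCentralSeries F i :=
          mem_upperCentralSeries_succ_iff.mp hz
        constructor
        · intro hx
          have h : z * x * z⁻¹ = z * x * z⁻¹ * x⁻¹ * x := by group
          rw [h]
          exact S.mul_mem (Subgroup.mem_sup_right (hcomm x)) hx
        · intro hx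
          have h : x = (z * x * z⁻¹ * x⁻¹)⁻¹ * (z * x * z⁻¹) := by group
          rw [h]
          exact S.mul_mem (S.inv_mem (Subgroup.mem_sup_right (hcomm x))) hx
      have hginv : g⁻¹ ∈ Subgroup.normalizer (S : Set F) := (Subgroup.normalizer (S : Set F)).inv_mem (hnorm hgi)
      have hconj : conjSub g H ≤ S := by
        intro x hx
        rw [mem_conjSub] at hx
        have hxS : g * x * g⁻¹ ∈ S := Subgroup.mem_sup_left hx
        have := (Subgroup.mem_normalizer_iff.mp hginv (g * x * g⁻¹)).mp hxS
        have h : g⁻¹ * (g * x * g⁻¹) * g⁻¹⁻¹ = x := by group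
        rwa [h] at this
      have hle : H ⊔ conjSub g H ≤ S := sup_le (fun x hx => Subgroup.mem_sup_left hx) hconj
      exact ih (hle hg)
  exact key n (by rw [show upperCentralSeries F n = ⊤ from hn, sup_top_eq]; trivial)

theorem maximal_subgroup_normal_of_locallyNilpotent {G : Type*} [Group G]
    (hLN : ∀ S : Subgroup G, S.FG → Group.IsNilpotent S)
    (U M : Subgroup G) (hMU : M < U)
    (hmax : ∀ S : Subgroup G, M < S → S ≤ U → S = U) :
    ∀ u ∈ U, ∀ m ∈ M, u * m * u⁻¹ ∈ M := by
  classical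
  by_cases hnorm : ∀ g ∈ U, conjSub g M ≤ M
  · intro u hu m hm
    have h := hnorm u⁻¹ (U.inv_mem hu)
    have hmem : u * m * u⁻¹ ∈ conjSub u⁻¹ M := by
      rw [mem_conjSub]
      have he : u⁻¹ * (u * m * u⁻¹) * u⁻¹⁻¹ = m := by group
      rwa [he]
    exact h hmem
  · exfalso
    push_neg at hnorm
    obtain ⟨g, hgU, hK⟩ := hnorm
    set K := conjSub g M with hKdef
    have hKU : K ≤ U := by
      intro x hx
      rw [hKdef, mem_conjSub] at hx
      have h : x = g⁻¹ * (g * x * g⁻¹) * g := by group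
      rw [h]
      exact U.mul_mem (U.mul_mem (U.inv_mem hgU) (hMU.le hx)) hgU
    have hMK : M < M ⊔ K :=
      lt_of_le_of_ne le_sup_left (fun h => hK (le_trans le_sup_right h.symm.le))
    have hsupU : M ⊔ K = U := hmax _ hMK (sup_le hMU.le hKU)
    have hgM : g ∉ M := by
      intro hgM
      refine hK (fun x hx => ?_)
      rw [hKdef, mem_conjSub] at hx
      have h : x = g⁻¹ * (g * x * g⁻¹) * g := by group
      rw [h]
      exact M.mul_mem (M.mul_mem (M.inv_mem hgM) hx) hgM
    have hgsup : g ∈ M ⊔ K := by rw [hsupU]; exact hgU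
    have hg2 : g ∈ Submonoid.closure ((↑M ∪ ↑K) ∪ (↑M ∪ ↑K)⁻¹ : Set G) := by
      have h : g ∈ (Subgroup.closure (↑M ∪ ↑K : Set G)).toSubmonoid := by
        rw [Subgroup.closure_union, Subgroup.closure_eq, Subgroup.closure_eq]
        exact hgsup
      rwa [Subgroup.closure_toSubmonoid] at h
    obtain ⟨l, hl, hlprod⟩ := Submonoid.exists_list_of_mem_closure hg2
    have hly : ∀ y ∈ l, y ∈ M ∨ y ∈ K := by
      intro y hy
      rcases hl y hy with h | h
      · rcases h with h | h
        · exact Or.inl h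
        · exact Or.inr h
      · rw [Set.mem_inv] at h
        rcases h with h | h
        · exact Or.inl (by simpa using M.inv_mem h)
        · exact Or.inr (by simpa using K.inv_mem h)
    set φ : G → G := fun y => if y ∈ M then y else g * y * g⁻¹ with hφ
    set S : Finset G := insert g (l.map φ).toFinset with hSdef
    set F : Subgroup G := Subgroup.closure (↑S : Set G) with hFdef
    have hnilF : Group.IsNilpotent F := hLN F ⟨S, rfl⟩
    have hgF : g ∈ F := Subgroup.subset_closure (by simp [hSdef])
    set H' : Subgroup F := M.subgroupOf F with hH'def
    set g' : F := ⟨g, hgF⟩ with hg'def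
    set T : Subgroup G := (H' ⊔ conjSub g' H').map F.subtype with hTdef
    have claim : ∀ y ∈ l, y ∈ T := by
      intro y hy
      by_cases hyM : y ∈ M
      · have hyS : y ∈ (↑S : Set G) := by
          simp only [hSdef, Finset.coe_insert, Set.mem_insert_iff, Finset.mem_coe,
            List.mem_toFinset, List.mem_map]
          exact Or.inr ⟨y, hy, by rw [hφ]; simp [hyM]⟩
        have hyF : y ∈ F := Subgroup.subset_closure hyS
        exact Subgroup.mem_map.mpr
          ⟨⟨y, hyF⟩, Subgroup.mem_sup_left (Subgroup.mem_subgroupOf.mpr hyM), rfl⟩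
      · have hyK : y ∈ K := (hly y hy).resolve_left hyM
        have hm : g * y * g⁻¹ ∈ M := by rwa [hKdef, mem_conjSub] at hyK
        have hmS : g * y * g⁻¹ ∈ (↑S : Set G) := by
          simp only [hSdef, Finset.coe_insert, Set.mem_insert_iff, Finset.mem_coe,
            List.mem_toFinset, List.mem_map]
          exact Or.inr ⟨y, hy, by rw [hφ]; simp [hyM]⟩
        have hmF : g * y * g⁻¹ ∈ F := Subgroup.subset_closure hmS
        set mF : F := ⟨g * y * g⁻¹, hmF⟩ with hmFdef
        have hmH' : mF ∈ H' := Subgroup.mem_subgroupOf.mpr hm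
        have hx : g'⁻¹ * mF * g' ∈ conjSub g' H' := by
          rw [mem_conjSub]
          have h : g' * (g'⁻¹ * mF * g') * g'⁻¹ = mF := by group
          rwa [h]
        refine Subgroup.mem_map.mpr ⟨g'⁻¹ * mF * g', Subgroup.mem_sup_right hx, ?_⟩
        show g⁻¹ * (g * y * g⁻¹) * g = y
        group
    have hgT : g ∈ T := by
      rw [← hlprod]
      exact T.list_prod_mem claim
    obtain ⟨x, hx, hxg⟩ := Subgroup.mem_map.mp hgT
    have hxg' : x = g' := Subtype.ext hxg
    rw [hxg'] at hx
    have := nilpotent_no_abnormal hnilF H' g' hx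
    exact hgM (Subgroup.mem_subgroupOf.mp this)
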